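/- Let X be a compact metrizable space, μ₁, μ₂ Borel probability measures on X and f₁, f₂ ∈ C(X) with μ₁(f₁) + μ₂(f₂) > 0. Then there exist open sets U₁, U₂ ⊆ X such that min_{x ∈ cl(U₁)} f₁(x) + min_{x ∈ cl(U₂)} f₂(x) > 0 and μ₁(U₁) + μ₂(U₂) > 1. -/

import Mathlib

open MeasureTheory

theorem open_sets_selection {X : Type*} [TopologicalSpace X] [CompactSpace X]
    [TopologicalSpace.MetrizableSpace X] [MeasurableSpace X] [BorelSpace X]
    (μ₁ μ₂ : ProbabilityMeasure X) (f₁ f₂ : C(X, ℝ))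
    (h : 0 < ∫ x, f₁ x ∂(μ₁ : Measure X) + ∫ x, f₂ x ∂(μ₂ : Measure X)) :
    ∃ U₁ U₂ : Set X, IsOpen U₁ ∧ IsOpen U₂ ∧
      (∃ t₁ t₂ : ℝ, (∀ x ∈ closure U₁, t₁ ≤ f₁ x) ∧ (∀ x ∈ closure U₂, t₂ ≤ f₂ x) ∧
        0 < t₁ + t₂) ∧
      1 < ((μ₁ : Measure X) U₁).toReal + ((μ₂ : Measure X) U₂).toReal := by
  letI := TopologicalSpace.metrizableSpaceMetric X
  set ν₁ : Measure X := (μ₁ : Measure X) with hν₁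
  set ν₂ : Measure X := (μ₂ : Measure X) with hν₂
  -- bound for f₁, f₂
  obtain ⟨M₁, hM₁⟩ := isCompact_univ.exists_bound_of_continuousOn f₁.continuous.continuousOn
  obtain ⟨M₂, hM₂⟩ := isCompact_univ.exists_bound_of_continuousOn f₂.continuous.continuousOn
  set M : ℝ := max (max M₁ M₂) 0 with hM
  have hMnn : 0 ≤ M := le_max_right _ _
  have hb₁ : ∀ x, |f₁ x| ≤ M := fun x =>
    le_trans (hM₁ x trivial) (le_trans (le_max_left _ _) (le_max_left _ _))
  have hb₂ : ∀ x, |f₂ x| ≤ M := fun x =>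
    le_trans (hM₂ x trivial) (le_trans (le_max_right _ _) (le_max_left _ _))
  set ε : ℝ := (∫ x, f₁ x ∂ν₁ + ∫ x, f₂ x ∂ν₂) / 4 with hε
  have hεpos : 0 < ε := by positivity
  set C : ℝ := M + ε with hC
  have hCpos : 0 < C := by positivity
  set g₁ : X → ℝ := fun x => f₁ x + (C - ε) with hg₁
  set g₂ : X → ℝ := fun x => f₂ x + (C - ε) with hg₂
  have hg₁nn : ∀ x, 0 ≤ g₁ x := fun x => by
    have := (abs_le.1 (hb₁ x)).1; simp only [hg₁, hC]; linarith
  have hg₂nn : ∀ x, 0 ≤ g₂ x := fun x => by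
    have := (abs_le.1 (hb₂ x)).1; simp only [hg₂, hC]; linarith
  have hg₁bd : ∀ x, g₁ x ≤ 2 * C := fun x => by
    have := (abs_le.1 (hb₁ x)).2; simp only [hg₁, hC]; linarith
  have hg₂bd : ∀ x, g₂ x ≤ 2 * C := fun x => by
    have := (abs_le.1 (hb₂ x)).2; simp only [hg₂, hC]; linarith
  -- integrability
  have hint₁ : Integrable f₁ ν₁ :=
    integrableOn_univ.mp (f₁.continuous.continuousOn.integrableOn_compact isCompact_univ)
  have hint₂ : Integrable f₂ ν₂ :=
    integrableOn_univ.mp (f₂.continuous.continuousOn.integrableOn_compact isCompact_univ)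
  have hgint₁ : Integrable g₁ ν₁ := hint₁.add (integrable_const _)
  have hgint₂ : Integrable g₂ ν₂ := hint₂.add (integrable_const _)
  have hIg₁ : ∫ x, g₁ x ∂ν₁ = ∫ x, f₁ x ∂ν₁ + (C - ε) := by
    rw [integral_add hint₁ (integrable_const _), integral_const]
    simp
  have hIg₂ : ∫ x, g₂ x ∂ν₂ = ∫ x, f₂ x ∂ν₂ + (C - ε) := by
    rw [integral_add hint₂ (integrable_const _), integral_const]
    simp
  -- layer cake
  have hlc₁ : ∫ x, g₁ x ∂ν₁ = ∫ t in Set.Ioc 0 (2 * C), (ν₁ {a | t ≤ g₁ a}).toReal :=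
    hgint₁.integral_eq_integral_Ioc_meas_le (Filter.Eventually.of_forall hg₁nn)
      (Filter.Eventually.of_forall hg₁bd)
  have hlc₂ : ∫ x, g₂ x ∂ν₂ = ∫ t in Set.Ioc 0 (2 * C), (ν₂ {a | t ≤ g₂ a}).toReal :=
    hgint₂.integral_eq_integral_Ioc_meas_le (Filter.Eventually.of_forall hg₂nn)
      (Filter.Eventually.of_forall hg₂bd)
  -- reflect the second
  have hrefl : ∫ t in Set.Ioc 0 (2 * C), (ν₂ {a | 2 * C - t ≤ g₂ a}).toReal
      = ∫ t in Set.Ioc 0 (2 * C), (ν₂ {a | t ≤ g₂ a}).toReal := by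
    have h2C : (0 : ℝ) ≤ 2 * C := by linarith
    rw [← intervalIntegral.integral_of_le h2C, ← intervalIntegral.integral_of_le h2C,
      intervalIntegral.integral_comp_sub_left (fun t => (ν₂ {a | t ≤ g₂ a}).toReal) (2 * C)]
    norm_num
  -- measurability / integrability on ℝ
  have hφ₁meas : Measurable (fun t : ℝ => (ν₁ {a | t ≤ g₁ a}).toReal) :=
    Measurable.ennreal_toReal (Antitone.measurable
      (fun s t hst => measure_mono (fun a ha => le_trans hst ha)))
  have hφ₂meas : Measurable (fun t : ℝ => (ν₂ {a | 2 * C - t ≤ g₂ a}).toReal) :=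
    Measurable.ennreal_toReal (Monotone.measurable
      (fun s t hst => measure_mono (fun a ha => le_trans (by linarith : 2 * C - t ≤ 2 * C - s) ha)))
  have hμIoc : volume (Set.Ioc (0:ℝ) (2*C)) < ⊤ := measure_Ioc_lt_top
  have hcint : IntegrableOn (fun _ : ℝ => (1:ℝ)) (Set.Ioc 0 (2*C)) volume :=
    integrableOn_const hμIoc.ne
  have hφ₁int : IntegrableOn (fun t : ℝ => (ν₁ {a | t ≤ g₁ a}).toReal)
      (Set.Ioc 0 (2*C)) volume := by
    refine Integrable.mono' hcint
      (hφ₁meas.aestronglyMeasurable.restrict) (Filter.Eventually.of_forall fun t => ?_)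
    rw [Real.norm_eq_abs, abs_of_nonneg ENNReal.toReal_nonneg]
    exact ENNReal.toReal_le_of_le_ofReal zero_le_one (by simpa using prob_le_one)
  have hφ₂int : IntegrableOn (fun t : ℝ => (ν₂ {a | 2 * C - t ≤ g₂ a}).toReal)
      (Set.Ioc 0 (2*C)) volume := by
    refine Integrable.mono' hcint
      (hφ₂meas.aestronglyMeasurable.restrict) (Filter.Eventually.of_forall fun t => ?_)
    rw [Real.norm_eq_abs, abs_of_nonneg ENNReal.toReal_nonneg]
    exact ENNReal.toReal_le_of_le_ofReal zero_le_one (by simpa using prob_le_one)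
  -- the key inequality on the sum of integrals
  have hsum : 2 * C < ∫ t in Set.Ioc 0 (2 * C),
      ((ν₁ {a | t ≤ g₁ a}).toReal + (ν₂ {a | 2 * C - t ≤ g₂ a}).toReal) := by
    rw [integral_add hφ₁int hφ₂int, hrefl, ← hlc₁, ← hlc₂, hIg₁, hIg₂]
    have : 0 < ∫ x, f₁ x ∂ν₁ + ∫ x, f₂ x ∂ν₂ := h
    simp only [hC]
    linarith [hεpos]
  -- find a good t
  have hex : ∃ t ∈ Set.Ioc (0:ℝ) (2 * C),
      1 < (ν₁ {a | t ≤ g₁ a}).toReal + (ν₂ {a | 2 * C - t ≤ g₂ a}).toReal := by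
    by_contra hcon
    push_neg at hcon
    have hle : ∫ t in Set.Ioc 0 (2 * C),
        ((ν₁ {a | t ≤ g₁ a}).toReal + (ν₂ {a | 2 * C - t ≤ g₂ a}).toReal)
        ≤ ∫ _t in Set.Ioc 0 (2 * C), (1:ℝ) := by
      refine setIntegral_mono_on (hφ₁int.add hφ₂int) hcint measurableSet_Ioc ?_
      exact fun t ht => hcon t ht
    rw [setIntegral_const] at hle
    simp only [Real.volume_Ioc, smul_eq_mul, mul_one] at hle
    rw [Real.volume_real_Ioc_of_le (by linarith)] at hle
    simp only [sub_zero] at hle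
    linarith [lt_of_lt_of_le hsum hle]
  obtain ⟨t, ht, htsum⟩ := hex
  -- define the open sets
  refine ⟨{x | t - C + ε / 2 < f₁ x}, {x | C - t + ε / 2 < f₂ x},
    isOpen_lt continuous_const f₁.continuous, isOpen_lt continuous_const f₂.continuous,
    ⟨t - C + ε / 2, C - t + ε / 2, ?_, ?_, by linarith⟩, ?_⟩
  · intro x hx
    have : closure {x | t - C + ε / 2 < f₁ x} ⊆ {x | t - C + ε / 2 ≤ f₁ x} :=
      closure_minimal (fun y hy => le_of_lt (Set.mem_setOf_eq ▸ hy)) (isClosed_le continuous_const f₁.continuous)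
    exact this hx
  · intro x hx
    have : closure {x | C - t + ε / 2 < f₂ x} ⊆ {x | C - t + ε / 2 ≤ f₂ x} :=
      closure_minimal (fun y hy => le_of_lt (Set.mem_setOf_eq ▸ hy)) (isClosed_le continuous_const f₂.continuous)
    exact this hx
  · have hsub₁ : {a | t ≤ g₁ a} ⊆ {x | t - C + ε / 2 < f₁ x} := by
      intro a ha
      simp only [hg₁, Set.mem_setOf_eq] at ha ⊢
      linarith
    have hsub₂ : {a | 2 * C - t ≤ g₂ a} ⊆ {x | C - t + ε / 2 < f₂ x} := by
      intro a ha
      simp only [hg₂, Set.mem_setOf_eq] at ha ⊢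
      linarith
    have h₁ : (ν₁ {a | t ≤ g₁ a}).toReal ≤ (ν₁ {x | t - C + ε / 2 < f₁ x}).toReal :=
      ENNReal.toReal_mono (measure_ne_top _ _) (measure_mono hsub₁)
    have h₂ : (ν₂ {a | 2 * C - t ≤ g₂ a}).toReal ≤ (ν₂ {x | C - t + ε / 2 < f₂ x}).toReal :=
      ENNReal.toReal_mono (measure_ne_top _ _) (measure_mono hsub₂)
    calc (1:ℝ) < _ := htsum
    _ ≤ _ := add_le_add h₁ h₂
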